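/- Let k ≥ 2, n ≥ 2(k+1), A = {1,…,k+1}, and let I = {π ∈ S_n : π(A) = A or π(A) ∩ A = ∅}. Then I contains no k-coset: for every injective sequence α₁,…,α_k of elements of {1,…,n} and injective sequence β₁,…,β_k of elements of {1,…,n}, the set {π ∈ S_n : π(α_i) = β_i for all i} is not contained in I. -/

import Mathlib

lemma snoc_inj' {m n : ℕ} {f : Fin m → Fin n} (hf : Function.Injective f) {x : Fin n}
    (hx : ∀ i, f i ≠ x) : Function.Injective (Fin.snoc f x) := by
  intro i j hij
  induction i using Fin.lastCases with
  | last =>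
    induction j using Fin.lastCases with
    | last => rfl
    | cast j =>
      simp only [Fin.snoc_last, Fin.snoc_castSucc] at hij
      exact absurd hij.symm (hx j)
  | cast i =>
    induction j using Fin.lastCases with
    | last =>
      simp only [Fin.snoc_last, Fin.snoc_castSucc] at hij
      exact absurd hij (hx i)
    | cast j =>
      simp only [Fin.snoc_castSucc] at hij
      exact congrArg _ (hf hij)

lemma exists_perm_comp {m n : ℕ} (g h : Fin m → Fin n) (hg : Function.Injective g)
    (hh : Function.Injective h) : ∃ π : Equiv.Perm (Fin n), ∀ i, π (g i) = h i := by
  classical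
  let e : {x : Fin n // x ∈ Set.range g} ≃ {x : Fin n // x ∈ Set.range h} :=
    (Equiv.ofInjective g hg).symm.trans (Equiv.ofInjective h hh)
  refine ⟨e.extendSubtype, fun i => ?_⟩
  rw [Equiv.extendSubtype_apply_of_mem e (g i) ⟨i, rfl⟩]
  haveI : Nonempty (Fin m) := ⟨i⟩
  simp only [e, Equiv.trans_apply]
  rw [show (Equiv.ofInjective g hg).symm ⟨g i, Set.mem_range_self i⟩ = i from
    (Equiv.ofInjective g hg).symm_apply_apply i]
  rfl

theorem stmt3 (k n : ℕ) (hk : 2 ≤ k) (hn : 2 * (k + 1) ≤ n)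
    (A : Finset (Fin n)) (hA : ∀ x : Fin n, x ∈ A ↔ (x : ℕ) < k + 1)
    (α β : Fin k → Fin n) (hα : Function.Injective α) (hβ : Function.Injective β) :
    ¬ ({π : Equiv.Perm (Fin n) | ∀ i, π (α i) = β i} ⊆
        {π : Equiv.Perm (Fin n) |
          Finset.image ⇑π A = A ∨ Finset.image ⇑π A ∩ A = ∅}) := by
  classical
  intro hsub
  have pick : ∀ (s t : Finset (Fin n)), s.card < t.card → ∃ x, x ∈ t ∧ x ∉ s := by
    intro s t h
    by_contra hno
    push_neg at hno
    exact absurd (Finset.card_le_card fun x hx => hno x hx) (not_le.mpr h)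
  have hAcard : A.card = k + 1 := by
    have hA' : A = Finset.map (Fin.castLEEmb (by omega : k + 1 ≤ n)) Finset.univ := by
      ext x
      simp only [Finset.mem_map, Finset.mem_univ, true_and, hA]
      constructor
      · intro hx; exact ⟨⟨x, hx⟩, Fin.ext rfl⟩
      · rintro ⟨y, rfl⟩; simp; exact Nat.le_of_lt_succ y.isLt
    rw [hA', Finset.card_map, Finset.card_univ, Fintype.card_fin]
  have hcompl : Aᶜ.card = n - (k + 1) := by
    rw [Finset.card_compl, hAcard, Fintype.card_fin]
  have himgα : (Finset.image α Finset.univ).card ≤ k :=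
    le_trans Finset.card_image_le (by simp)
  have himgβ : (Finset.image β Finset.univ).card ≤ k :=
    le_trans Finset.card_image_le (by simp)
  obtain ⟨a, haA, haα⟩ := pick (Finset.image α Finset.univ) A (by omega)
  obtain ⟨b, hbA, hbβ⟩ := pick (Finset.image β Finset.univ) A (by omega)
  obtain ⟨c, hcA, hcβ⟩ := pick (Finset.image β Finset.univ) Aᶜ (by omega)
  have hcA' : c ∉ A := Finset.mem_compl.mp hcA
  have haα' : ∀ i, α i ≠ a := fun i h => haα (Finset.mem_image.mpr ⟨i, Finset.mem_univ i, h⟩)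
  have hbβ' : ∀ i, β i ≠ b := fun i h => hbβ (Finset.mem_image.mpr ⟨i, Finset.mem_univ i, h⟩)
  have hcβ' : ∀ i, β i ≠ c := fun i h => hcβ (Finset.mem_image.mpr ⟨i, Finset.mem_univ i, h⟩)
  by_cases hex : ∃ i, α i ∈ A
  · obtain ⟨i0, hi0⟩ := hex
    by_cases hb0 : β i0 ∈ A
    · -- map a outside
      obtain ⟨π, hπ⟩ := exists_perm_comp (Fin.snoc α a) (Fin.snoc β c)
        (snoc_inj' hα haα') (snoc_inj' hβ hcβ')
      have hmem : ∀ i, π (α i) = β i := fun i => by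
        have := hπ i.castSucc; simpa [Fin.snoc_castSucc] using this
      have hpa : π a = c := by have := hπ (Fin.last k); simpa using this
      rcases hsub hmem with h | h
      · exact hcA' (by rw [← h]; exact Finset.mem_image.mpr ⟨a, haA, hpa⟩)
      · exact absurd (Finset.mem_inter.mpr
          ⟨Finset.mem_image.mpr ⟨α i0, hi0, hmem i0⟩, hb0⟩) (by simp [h])
    · -- map a to b inside
      obtain ⟨π, hπ⟩ := exists_perm_comp (Fin.snoc α a) (Fin.snoc β b)
        (snoc_inj' hα haα') (snoc_inj' hβ hbβ')
      have hmem : ∀ i, π (α i) = β i := fun i => by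
        have := hπ i.castSucc; simpa [Fin.snoc_castSucc] using this
      have hpa : π a = b := by have := hπ (Fin.last k); simpa using this
      rcases hsub hmem with h | h
      · exact hb0 (by rw [← h]; exact Finset.mem_image.mpr ⟨α i0, hi0, hmem i0⟩)
      · exact absurd (Finset.mem_inter.mpr
          ⟨Finset.mem_image.mpr ⟨a, haA, hpa⟩, hbA⟩) (by simp [h])
  · push_neg at hex
    obtain ⟨a1, a2, ha1, ha2, hne⟩ := Finset.one_lt_card_iff.mp (by omega : 1 < A.card)
    have hg : Function.Injective (Fin.snoc (Fin.snoc α a1) a2 : Fin (k + 2) → Fin n) := by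
      refine snoc_inj' (snoc_inj' hα (fun i h => hex i (h ▸ ha1))) ?_
      intro i
      induction i using Fin.lastCases with
      | last => simpa using hne
      | cast j => simpa [Fin.snoc_castSucc] using fun h : α j = a2 => hex j (h ▸ ha2)
    have hh : Function.Injective (Fin.snoc (Fin.snoc β b) c : Fin (k + 2) → Fin n) := by
      refine snoc_inj' (snoc_inj' hβ hbβ') ?_
      intro i
      induction i using Fin.lastCases with
      | last => simpa using fun h : b = c => hcA' (h ▸ hbA)
      | cast j => simpa [Fin.snoc_castSucc] using hcβ' j
    obtain ⟨π, hπ⟩ := exists_perm_comp _ _ hg hh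
    have hmem : ∀ i, π (α i) = β i := fun i => by
      have := hπ i.castSucc.castSucc; simpa [Fin.snoc_castSucc] using this
    have hpa1 : π a1 = b := by
      have := hπ (Fin.last k).castSucc
      simpa [Fin.snoc_castSucc, Fin.snoc_last] using this
    have hpa2 : π a2 = c := by have := hπ (Fin.last (k + 1)); simpa using this
    rcases hsub hmem with h | h
    · exact hcA' (by rw [← h]; exact Finset.mem_image.mpr ⟨a2, ha2, hpa2⟩)
    · exact absurd (Finset.mem_inter.mpr
        ⟨Finset.mem_image.mpr ⟨a1, ha1, hpa1⟩, hbA⟩) (by simp [h])
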